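/- Let E be a finite-dimensional real inner product space and p : E × ℝ₊ → E a map such that p(·,μ) is differentiable for each μ > 0 and p(z,μ) → Π(z) pointwise as μ → 0 for a map Π : E → E (the limit being locally uniform, e.g. with ‖p(z,μ) - Π(z)‖ ≤ C μ). Suppose the derivative D_z p(z,μ) converges to a linear map T* as (z,μ) → (z*,0). Then Π is strictly differentiable at z* with derivative T*. -/
import Mathlib

theorem stmt_5 {E : Type*} [NormedAddCommGroup E] [InnerProductSpace ℝ E]
    [FiniteDimensional ℝ E]
    (p : E → ℝ → E) (Pi : E → E) (C : ℝ) (zs : E) (T : E →L[ℝ] E)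
    (hdiff : ∀ μ : ℝ, 0 < μ → Differentiable ℝ (fun z => p z μ))
    (hunif : ∀ z : E, ∀ μ : ℝ, 0 < μ → ‖p z μ - Pi z‖ ≤ C * μ)
    (hconv : ∀ ε > (0 : ℝ), ∃ δ > (0 : ℝ), ∀ z : E, ∀ μ : ℝ, 0 < μ →
      ‖z - zs‖ < δ → μ < δ → ‖fderiv ℝ (fun w => p w μ) z - (T : E →L[ℝ] E)‖ < ε) :
    ∀ ε > (0 : ℝ), ∃ δ > (0 : ℝ), ∀ z₁ z₂ : E, ‖z₁ - zs‖ < δ → ‖z₂ - zs‖ < δ →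
      ‖Pi z₂ - Pi z₁ - T (z₂ - z₁)‖ ≤ ε * ‖z₂ - z₁‖ := by
  intro ε hε
  have hC : 0 ≤ C := by
    have := hunif zs 1 one_pos
    nlinarith [norm_nonneg (p zs 1 - Pi zs)]
  obtain ⟨δ, hδ, hd⟩ := hconv (ε / 2) (by linarith)
  refine ⟨δ, hδ, fun z₁ z₂ h1 h2 => ?_⟩
  -- it suffices to show the bound up to an arbitrary η > 0
  have key : ∀ η > (0 : ℝ), ‖Pi z₂ - Pi z₁ - T (z₂ - z₁)‖ ≤ ε / 2 * ‖z₂ - z₁‖ + η := by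
    intro η hη
    set μ : ℝ := min (δ / 2) (η / (2 * (C + 1))) with hμdef
    have hμpos : 0 < μ := lt_min (by linarith) (by positivity)
    have hμδ : μ < δ := lt_of_le_of_lt (min_le_left _ _) (by linarith)
    have hμη : 2 * C * μ ≤ η := by
      have h1 : μ ≤ η / (2 * (C + 1)) := min_le_right _ _
      have h2 : 2 * (C + 1) * μ ≤ η := by
        rw [le_div_iff₀ (by positivity : (0:ℝ) < 2 * (C + 1))] at h1
        linarith
      nlinarith
    have hmvt : ‖p z₂ μ - p z₁ μ - T (z₂ - z₁)‖ ≤ ε / 2 * ‖z₂ - z₁‖ := by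
      have hconvset : Convex ℝ (Metric.ball zs δ) := convex_ball zs δ
      refine hconvset.norm_image_sub_le_of_norm_fderiv_le'
        (fun x _ => (hdiff μ hμpos).differentiableAt) (fun x hx => ?_) ?_ ?_
      · exact le_of_lt (hd x μ hμpos (by simpa [dist_eq_norm] using hx) hμδ)
      · simpa [Metric.mem_ball, dist_eq_norm] using h1
      · simpa [Metric.mem_ball, dist_eq_norm] using h2
    have e1 := hunif z₁ μ hμpos
    have e2 := hunif z₂ μ hμpos
    calc ‖Pi z₂ - Pi z₁ - T (z₂ - z₁)‖
        = ‖(p z₂ μ - p z₁ μ - T (z₂ - z₁)) - (p z₂ μ - Pi z₂) + (p z₁ μ - Pi z₁)‖ := by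
          congr 1
          abel
      _ ≤ ‖(p z₂ μ - p z₁ μ - T (z₂ - z₁)) - (p z₂ μ - Pi z₂)‖ + ‖p z₁ μ - Pi z₁‖ :=
          norm_add_le _ _
      _ ≤ ‖p z₂ μ - p z₁ μ - T (z₂ - z₁)‖ + ‖p z₂ μ - Pi z₂‖ + ‖p z₁ μ - Pi z₁‖ := by
          have := norm_sub_le (p z₂ μ - p z₁ μ - T (z₂ - z₁)) (p z₂ μ - Pi z₂)
          linarith
      _ ≤ ε / 2 * ‖z₂ - z₁‖ + η := by nlinarith
  have hle : ‖Pi z₂ - Pi z₁ - T (z₂ - z₁)‖ ≤ ε / 2 * ‖z₂ - z₁‖ :=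
    le_of_forall_pos_le_add key
  nlinarith [norm_nonneg (z₂ - z₁)]
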